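/- Let p ∈ (0,1) and let F, G be as follows: F(x,y) = p·x·log_p(x) + (1-p)·y·log_p(y) + p·x - p·y and G(x,y) = (p·x + (1-p)·y)·log_p(p·x + (1-p)·y), with 0·log_p(0) = 0. Then for all 0 ≤ y ≤ x ≤ 1, F(x,y) - G(x,y) ≥ p·(x - y)·log_p( p·x / (p·x + (1-p)·y) ) (where the right-hand side is interpreted as 0 when x = 0). -/

import Mathlib

theorem F_sub_G_lower (p : ℝ) (hp : 0 < p) (hp1 : p < 1)
    (F G : ℝ → ℝ → ℝ)
    (hF : ∀ x y, F x y = p * x * (Real.log x / Real.log p)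
      + (1 - p) * y * (Real.log y / Real.log p) + p * x - p * y)
    (hG : ∀ x y, G x y = (p * x + (1 - p) * y) *
      (Real.log (p * x + (1 - p) * y) / Real.log p))
    (x y : ℝ) (hy : 0 ≤ y) (hxy : y ≤ x) (hx1 : x ≤ 1) :
    F x y - G x y ≥ p * (x - y) *
      (Real.log (p * x / (p * x + (1 - p) * y)) / Real.log p) := by
  have hL : Real.log p < 0 := Real.log_neg hp hp1
  have hLne : Real.log p ≠ 0 := ne_of_lt hL
  rw [hF, hG]
  set L := Real.log p with hLdef
  rcases eq_or_lt_of_le (hy.trans hxy) with hx0 | hx0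
  · -- x = 0, hence y = 0
    have hy0 : y = 0 := le_antisymm (hxy.trans hx0.symm.le) hy
    subst hy0
    rw [← hx0]
    simp
  · -- x > 0
    have hs : 0 < p * x + (1 - p) * y := by nlinarith
    have hlpx : Real.log (p * x) = L + Real.log x := Real.log_mul hp.ne' hx0.ne'
    rcases eq_or_lt_of_le hy with hy0 | hy0
    · -- y = 0
      have hy0' : y = 0 := hy0.symm
      subst hy0'
      have hpx : 0 < p * x := mul_pos hp hx0
      have : p * x / (p * x + (1 - p) * 0) = 1 := by
        field_simp
        ring
      rw [this]
      simp only [Real.log_one, zero_div, mul_zero, ge_iff_le, mul_zero, sub_zero,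
        add_zero, zero_mul]
      rw [hlpx]
      have heq : p * x * (Real.log x / L) + p * x
          - p * x * ((L + Real.log x) / L) = 0 := by
        field_simp
        ring
      linarith
    · -- y > 0
      have hls : Real.log (p * x / (p * x + (1 - p) * y))
          = L + Real.log x - Real.log (p * x + (1 - p) * y) := by
        rw [Real.log_div (mul_pos hp hx0).ne' hs.ne', hlpx]
      -- key concavity inequality
      have hgm : x ^ p * y ^ (1 - p) ≤ p * x + (1 - p) * y := by
        have := Real.geom_mean_le_arith_mean2_weighted hp.le
          (by linarith : (0:ℝ) ≤ 1 - p) hx0.le hy0.le (by ring)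
        linarith [this]
      have hgmpos : 0 < x ^ p * y ^ (1 - p) :=
        mul_pos (Real.rpow_pos_of_pos hx0 _) (Real.rpow_pos_of_pos hy0 _)
      have hlog : p * Real.log x + (1 - p) * Real.log y
          ≤ Real.log (p * x + (1 - p) * y) := by
        have h2 : Real.log (x ^ p * y ^ (1 - p))
            = p * Real.log x + (1 - p) * Real.log y := by
          rw [Real.log_mul (Real.rpow_pos_of_pos hx0 _).ne'
            (Real.rpow_pos_of_pos hy0 _).ne', Real.log_rpow hx0, Real.log_rpow hy0]
        rw [← h2]
        exact Real.log_le_log hgmpos hgm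
      have hmul := mul_le_mul_of_nonneg_left hlog hy
      -- key inequality (after multiplying the goal by L < 0)
      have key : p * (x - y) * Real.log (p * x / (p * x + (1 - p) * y))
          ≥ p * x * Real.log x + (1 - p) * y * Real.log y
            - (p * x + (1 - p) * y) * Real.log (p * x + (1 - p) * y)
            + p * (x - y) * L := by
        rw [hls]
        nlinarith [hmul]
      have hg2 : p * x * (Real.log x / L) + (1 - p) * y * (Real.log y / L) + p * x - p * y
          - (p * x + (1 - p) * y) * (Real.log (p * x + (1 - p) * y) / L)
          = (p * x * Real.log x + (1 - p) * y * Real.log y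
            - (p * x + (1 - p) * y) * Real.log (p * x + (1 - p) * y)
            + p * (x - y) * L) / L := by
        field_simp
        ring
      have hg3 : p * (x - y) * (Real.log (p * x / (p * x + (1 - p) * y)) / L)
          = (p * (x - y) * Real.log (p * x / (p * x + (1 - p) * y))) / L := by
        ring
      rw [ge_iff_le, ← sub_nonneg]
      rw [show p * x * (Real.log x / L) + (1 - p) * y * (Real.log y / L) + p * x - p * y
          - (p * x + (1 - p) * y) * (Real.log (p * x + (1 - p) * y) / L)
          - p * (x - y) * (Real.log (p * x / (p * x + (1 - p) * y)) / L)
          = ((p * x * Real.log x + (1 - p) * y * Real.log y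
            - (p * x + (1 - p) * y) * Real.log (p * x + (1 - p) * y)
            + p * (x - y) * L)
            - p * (x - y) * Real.log (p * x / (p * x + (1 - p) * y))) / L by
        field_simp; ring]
      rw [div_nonneg_iff]
      right
      exact ⟨by linarith [key], hL.le⟩
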